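/- If L₊ and L₋ are (densely defined self-adjoint) operators on real L², f is a real-valued function with L₋^{1/2} L₊ L₋^{1/2} f = -μ² f for some μ > 0, and one sets g := L₋^{1/2} f - (i/μ) L₊ L₋^{1/2} f, then the operator ℒ defined by ℒu = L₊ Re(u) + i L₋ Im(u) satisfies -iℒg = μg. In particular -iℒ has the positive eigenvalue μ provided L₋^{1/2} f ≠ 0. -/

import Mathlib

open Complex

theorem eigenvalue_of_minus_i_L {X : Type*}
    (Lp Lm S : (X → ℝ) →ₗ[ℝ] (X → ℝ))
    (hsqrt : ∀ v, Lm v = S (S v))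
    (μ : ℝ) (hμ : 0 < μ) (f : X → ℝ)
    (heig : S (Lp (S f)) = (-(μ ^ 2)) • f)
    (g : X → ℂ)
    (hg : g = fun x => (S f x : ℂ) - (Complex.I / μ) * (Lp (S f) x : ℂ)) :
    (∀ x, -Complex.I *
        ((Lp (fun y => (g y).re) x : ℂ) + Complex.I * (Lm (fun y => (g y).im) x : ℂ))
      = (μ : ℂ) * g x) ∧ (S f ≠ 0 → g ≠ 0) := by
  have hμ' : μ ≠ 0 := ne_of_gt hμ
  have hre : (fun y => (g y).re) = S f := by
    funext y
    simp [hg, Complex.div_re, Complex.div_im]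
  have him : (fun y => (g y).im) = (-(1/μ)) • Lp (S f) := by
    funext y
    simp [hg, Complex.div_re, Complex.div_im, Complex.normSq]
  constructor
  · intro x
    rw [hre, him, map_smul, hsqrt, heig, map_smul, hg]
    simp only [Pi.smul_apply, smul_eq_mul]
    push_cast
    have hμC : (μ : ℂ) ≠ 0 := by exact_mod_cast hμ'
    field_simp
    linear_combination (-(μ:ℂ) * (S f x : ℂ)) * Complex.I_sq
  · intro hSf hg0
    apply hSf
    funext y
    have : (fun y => (g y).re) = (fun y => ((0 : X → ℂ) y).re) := by rw [hg0]
    have := congrFun (hre.symm.trans this) y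
    simpa using this
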